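/- Let f : ℝ³ → ℝ be a polynomial function of total degree at most 3. Then f cannot have two distinct nondegenerate local minimum points, i.e., there do not exist two distinct points a ≠ b in ℝ³ at which all partial derivatives of f vanish and the Hessian matrix of f is positive definite. Likewise, there do not exist two distinct points at which all partial derivatives of f vanish and the Hessian matrix of f is negative definite. -/

import Mathlib

open MvPolynomial Matrix

/-- The Hessian matrix of (the polynomial function of) a polynomial in three real
variables at a point: the 3×3 matrix of second partial derivatives evaluated there. -/
noncomputable def hess3 (f : MvPolynomial (Fin 3) ℝ) (p : Fin 3 → ℝ) :
    Matrix (Fin 3) (Fin 3) ℝ :=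
  Matrix.of fun i j => eval p (pderiv i (pderiv j f))

/-- A point of ℝ³ is a critical point of a polynomial in three variables if all three
partial derivatives vanish there. -/
def IsCriticalPt3 (f : MvPolynomial (Fin 3) ℝ) (p : Fin 3 → ℝ) : Prop :=
  ∀ i, eval p (pderiv i f) = 0

noncomputable def lineSub (a v : Fin 3 → ℝ) : MvPolynomial (Fin 3) ℝ →ₐ[ℝ] Polynomial ℝ :=
  MvPolynomial.aeval fun i => Polynomial.C (a i) + Polynomial.C (v i) * Polynomial.X

lemma lineSub_X (a v : Fin 3 → ℝ) (j : Fin 3) :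
    lineSub a v (MvPolynomial.X j) = Polynomial.C (a j) + Polynomial.C (v j) * Polynomial.X := by
  simp [lineSub]

lemma deriv_lineSub (a v : Fin 3 → ℝ) (f : MvPolynomial (Fin 3) ℝ) :
    Polynomial.derivative (lineSub a v f) =
      ∑ i, Polynomial.C (v i) * lineSub a v (pderiv i f) := by
  induction f using MvPolynomial.induction_on with
  | C r => simp [lineSub]
  | add p q hp hq =>
      simp only [map_add, hp, hq, mul_add, Finset.sum_add_distrib]
  | mul_X p i hp =>
      rw [_root_.map_mul, Polynomial.derivative_mul, hp, lineSub_X]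
      have hR : ∀ j : Fin 3, Polynomial.C (v j) * lineSub a v (pderiv j (p * MvPolynomial.X i)) =
          Polynomial.C (v j) * lineSub a v (pderiv j p) *
            (Polynomial.C (a i) + Polynomial.C (v i) * Polynomial.X) +
          (if i = j then Polynomial.C (v j) * lineSub a v p else 0) := by
        intro j
        rw [pderiv_mul, map_add, _root_.map_mul, _root_.map_mul, lineSub_X, pderiv_X,
          Pi.single_apply, apply_ite (lineSub a v), _root_.map_one, map_zero]
        split <;> ring
      rw [Finset.sum_congr rfl fun j _ => hR j, Finset.sum_add_distrib, Finset.sum_ite_eq,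
        Finset.sum_mul]
      simp only [Finset.mem_univ, if_true]
      simp only [Polynomial.derivative_add, Polynomial.derivative_C, Polynomial.derivative_mul,
        Polynomial.derivative_X, mul_one, zero_add, mul_zero, add_zero, zero_mul]
      ring

lemma eval_lineSub (a v : Fin 3 → ℝ) (f : MvPolynomial (Fin 3) ℝ) (t : ℝ) :
    (lineSub a v f).eval t = eval (fun i => a i + v i * t) f := by
  rw [lineSub, ← Polynomial.coe_aeval_eq_eval, ← AlgHom.comp_apply, MvPolynomial.comp_aeval]
  have h : (fun i => Polynomial.aeval t (Polynomial.C (a i) + Polynomial.C (v i) * Polynomial.X))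
      = fun i => a i + v i * t := by funext i; simp
  rw [h, MvPolynomial.aeval_def, Algebra.algebraMap_self]
  rfl

lemma quad_aux (p : Polynomial ℝ) (hp : p.natDegree ≤ 2)
    (h0 : p.eval 0 = 0) (h1 : p.eval 1 = 0) :
    (Polynomial.derivative p).eval 0 + (Polynomial.derivative p).eval 1 = 0 := by
  have hd : (Polynomial.derivative p).natDegree ≤ 1 :=
    (Polynomial.natDegree_derivative_le p).trans (by omega)
  rw [Polynomial.eval_eq_sum_range' (n := 3) (lt_of_le_of_lt hp (by norm_num))] at h0 h1
  rw [Polynomial.eval_eq_sum_range' (n := 2) (lt_of_le_of_lt hd (by norm_num)),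
      Polynomial.eval_eq_sum_range' (n := 2) (lt_of_le_of_lt hd (by norm_num))]
  simp only [Finset.sum_range_succ, Finset.sum_range_zero, Polynomial.coeff_derivative] at *
  push_cast at *
  nlinarith [h0, h1]

lemma key_sum (f : MvPolynomial (Fin 3) ℝ) (hdeg : f.totalDegree ≤ 3) (a b : Fin 3 → ℝ)
    (ha : IsCriticalPt3 f a) (hb : IsCriticalPt3 f b) :
    dotProduct (b - a) (hess3 f a *ᵥ (b - a)) + dotProduct (b - a) (hess3 f b *ᵥ (b - a)) = 0 := by
  set v : Fin 3 → ℝ := b - a with hv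
  have hvapp : ∀ i, v i = b i - a i := fun i => rfl
  set g : Polynomial ℝ := lineSub a v f with hg
  set p : Polynomial ℝ := Polynomial.derivative g with hpdef
  -- degree bound
  have h1 : ∀ i, (Polynomial.C (a i) + Polynomial.C (v i) * Polynomial.X).natDegree ≤ 1 := by
    intro i
    refine (Polynomial.natDegree_add_le _ _).trans ?_
    simp only [Polynomial.natDegree_C, max_le_iff]
    exact ⟨Nat.zero_le _, (Polynomial.natDegree_C_mul_le _ _).trans (by simp)⟩
  have hgdeg : g.natDegree ≤ 3 := by
    simpa [hg, lineSub] using MvPolynomial.aeval_natDegree_le f hdeg _ h1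
  have hp2 : p.natDegree ≤ 2 := (Polynomial.natDegree_derivative_le g).trans (by omega)
  -- point identities
  have hpt0 : (fun i => a i + v i * 0) = a := by funext i; simp
  have hpt1 : (fun i => a i + v i * 1) = b := by funext i; simp [hvapp]
  -- critical point evals
  have hp0 : p.eval 0 = 0 := by
    rw [hpdef, hg, deriv_lineSub, Polynomial.eval_finset_sum]
    simp only [Polynomial.eval_mul, Polynomial.eval_C, eval_lineSub, hpt0]
    simp [ha _]
  have hp1 : p.eval 1 = 0 := by
    rw [hpdef, hg, deriv_lineSub, Polynomial.eval_finset_sum]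
    simp only [Polynomial.eval_mul, Polynomial.eval_C, eval_lineSub, hpt1]
    simp [hb _]
  have hkey := quad_aux p hp2 hp0 hp1
  have hd2 : Polynomial.derivative p =
      ∑ i, Polynomial.C (v i) * ∑ j, Polynomial.C (v j) * lineSub a v (pderiv j (pderiv i f)) := by
    rw [hpdef, hg, deriv_lineSub, Polynomial.derivative_sum]
    exact Finset.sum_congr rfl fun i _ => by rw [Polynomial.derivative_C_mul, deriv_lineSub]
  have hform : ∀ c : Fin 3 → ℝ,
      (∑ i, v i * ∑ j, v j * eval c (pderiv j (pderiv i f))) = dotProduct v (hess3 f c *ᵥ v) := by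
    intro c
    simp only [dotProduct, Matrix.mulVec, hess3, Matrix.of_apply, Finset.mul_sum]
    rw [Finset.sum_comm]
    exact Finset.sum_congr rfl fun i _ => Finset.sum_congr rfl fun j _ => by ring
  have he0 : (Polynomial.derivative p).eval 0 = dotProduct v (hess3 f a *ᵥ v) := by
    rw [hd2, Polynomial.eval_finset_sum]
    simp only [Polynomial.eval_mul, Polynomial.eval_C, Polynomial.eval_finset_sum,
      eval_lineSub, hpt0]
    exact hform a
  have he1 : (Polynomial.derivative p).eval 1 = dotProduct v (hess3 f b *ᵥ v) := by
    rw [hd2, Polynomial.eval_finset_sum]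
    simp only [Polynomial.eval_mul, Polynomial.eval_C, Polynomial.eval_finset_sum,
      eval_lineSub, hpt1]
    exact hform b
  rw [← he0, ← he1]
  exact hkey

/-- A polynomial function `ℝ³ → ℝ` of total degree at most 3 cannot have two distinct
nondegenerate local minimum points (critical points with positive definite Hessian),
nor two distinct nondegenerate local maximum points (critical points with negative
definite Hessian). -/
theorem no_two_morse_minima_or_maxima_deg3
    (f : MvPolynomial (Fin 3) ℝ) (hdeg : f.totalDegree ≤ 3) :
    (¬ ∃ a b : Fin 3 → ℝ, a ≠ b ∧ IsCriticalPt3 f a ∧ IsCriticalPt3 f b ∧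
        (hess3 f a).PosDef ∧ (hess3 f b).PosDef) ∧
    (¬ ∃ a b : Fin 3 → ℝ, a ≠ b ∧ IsCriticalPt3 f a ∧ IsCriticalPt3 f b ∧
        (-(hess3 f a)).PosDef ∧ (-(hess3 f b)).PosDef) := by
  constructor
  · rintro ⟨a, b, hab, ha, hb, Ha, Hb⟩
    have hvne : b - a ≠ 0 := sub_ne_zero.mpr (Ne.symm hab)
    have h0 := key_sum f hdeg a b ha hb
    have h1 := Ha.dotProduct_mulVec_pos hvne
    have h2 := Hb.dotProduct_mulVec_pos hvne
    simp only [star_trivial] at h1 h2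
    linarith
  · rintro ⟨a, b, hab, ha, hb, Ha, Hb⟩
    have hvne : b - a ≠ 0 := sub_ne_zero.mpr (Ne.symm hab)
    have h0 := key_sum f hdeg a b ha hb
    have h1 := Ha.dotProduct_mulVec_pos hvne
    have h2 := Hb.dotProduct_mulVec_pos hvne
    simp only [star_trivial, Matrix.neg_mulVec, dotProduct_neg] at h1 h2
    linarith
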